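/- Let S be a complete idempotent semiring with dual product ⊙, B ∈ S^{n×n}, X ∈ S^{n×p}, and B_* := ⋀_{k≥0} B^{⊙k} the meet-closure of B (with B^{⊙0} the dual identity matrix E^⊙). Then the following are equivalent: (1) X ≤ B ⊙ X; (2) B ⧵♭ X ≤ X, where B ⧵♭ X is the dual residual of Y ↦ B ⊙ Y applied to X; (3) B_* ⧵♭ X = X; (4) B_* ⊙ X = X. -/
import Mathlib


/-- A complete idempotent semiring: a complete lattice whose join is the (idempotent)
addition, together with a multiplicative monoid structure distributing over
arbitrary joins (hence `⊥` is absorbing). -/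
class CompleteIdempotentSemiring (S : Type*) extends CompleteLattice S, Monoid S where
  mul_sSup : ∀ (a : S) (s : Set S), a * sSup s = ⨆ x ∈ s, a * x
  sSup_mul : ∀ (a : S) (s : Set S), sSup s * a = ⨆ x ∈ s, x * a

/-- Matrices over `S`, with the pointwise (complete-lattice) order. -/
abbrev Mat (n p : ℕ) (S : Type*) := Fin n → Fin p → S

variable {S : Type*} [CompleteIdempotentSemiring S]

/-- A dual product on `S`: associative, with identity `1`, distributing over
arbitrary meets, and with `⊤` absorbing. -/
structure IsDualProduct (od : S → S → S) : Prop where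
  assoc : ∀ a b c : S, od (od a b) c = od a (od b c)
  one_od : ∀ a : S, od 1 a = a
  od_one : ∀ a : S, od a 1 = a
  od_sInf : ∀ (a : S) (s : Set S), od a (sInf s) = ⨅ x ∈ s, od a x
  sInf_od : ∀ (a : S) (s : Set S), od (sInf s) a = ⨅ x ∈ s, od x a
  top_od : ∀ a : S, od ⊤ a = ⊤
  od_top : ∀ a : S, od a ⊤ = ⊤

/-- Dual matrix product: `(A ⊙ X) i j = ⨅ k, A i k ⊙ X k j`. -/
def dmul (od : S → S → S) {n p m : ℕ} (A : Mat n p S) (X : Mat p m S) : Mat n m S :=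
  fun i j => ⨅ k, od (A i k) (X k j)

/-- Ordinary matrix product in the idempotent semiring: `(A ⊗ X) i j = ⨆ k, A i k * X k j`. -/
def mmul {n p m : ℕ} (A : Mat n p S) (X : Mat p m S) : Mat n m S :=
  fun i j => ⨆ k, A i k * X k j

/-- Dual identity matrix: `1` on the diagonal, `⊤` elsewhere. -/
def dualId (n : ℕ) : Mat n n S := fun i j => if i = j then 1 else ⊤

/-- Iterated dual matrix product `B^{⊙k}`. -/
def dpow (od : S → S → S) {n : ℕ} (B : Mat n n S) : ℕ → Mat n n S
  | 0 => dualId n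
  | k + 1 => dmul od B (dpow od B k)

/-- Dual (meet) closure `B_* = ⋀_{k ≥ 0} B^{⊙k}`. -/
def dstar (od : S → S → S) {n : ℕ} (B : Mat n n S) : Mat n n S :=
  ⨅ k : ℕ, dpow od B k

/-- Iterated matrix product `A^k`. -/
def mpow {n : ℕ} (A : Mat n n S) : ℕ → Mat n n S
  | 0 => fun i j => if i = j then 1 else ⊥
  | k + 1 => mmul A (mpow A k)

/-- Kleene star `A^* = ⊕_{k ≥ 0} A^k`. -/
def mstar {n : ℕ} (A : Mat n n S) : Mat n n S :=
  ⨆ k : ℕ, mpow A k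

section Aux

variable {od : S → S → S}

lemma od_iInf' (h : IsDualProduct od) (a : S) {ι : Sort*} (f : ι → S) :
    od a (⨅ i, f i) = ⨅ i, od a (f i) := by
  rw [iInf, h.od_sInf, iInf_range]

lemma iInf_od' (h : IsDualProduct od) (a : S) {ι : Sort*} (f : ι → S) :
    od (⨅ i, f i) a = ⨅ i, od (f i) a := by
  rw [iInf, h.sInf_od, iInf_range]

lemma od_mono_right (h : IsDualProduct od) {a x y : S} (hxy : x ≤ y) :
    od a x ≤ od a y := by
  have h2 := h.od_sInf a {x, y}
  rw [sInf_pair, inf_eq_left.mpr hxy] at h2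
  rw [h2]
  exact iInf₂_le y (by simp)

lemma od_mono_left (h : IsDualProduct od) {a x y : S} (hxy : x ≤ y) :
    od x a ≤ od y a := by
  have h2 := h.sInf_od a {x, y}
  rw [sInf_pair, inf_eq_left.mpr hxy] at h2
  rw [h2]
  exact iInf₂_le y (by simp)

lemma dmul_mono (h : IsDualProduct od) {n p m : ℕ} {A A' : Mat n p S}
    {X X' : Mat p m S} (hA : A ≤ A') (hX : X ≤ X') :
    dmul od A X ≤ dmul od A' X' := by
  intro i j
  refine iInf_mono fun k => ?_
  exact le_trans (od_mono_left h (hA i k)) (od_mono_right h (hX k j))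

lemma dmul_dualId_left (h : IsDualProduct od) {n m : ℕ} (X : Mat n m S) :
    dmul od (dualId n) X = X := by
  funext i j
  apply le_antisymm
  · exact le_trans (iInf_le _ i) (by simp [dualId, h.one_od])
  · refine le_iInf fun k => ?_
    by_cases hik : i = k
    · subst hik; simp [dualId, h.one_od]
    · simp [dualId, hik, h.top_od]

lemma dmul_assoc (h : IsDualProduct od) {n p m q : ℕ} (A : Mat n p S)
    (B : Mat p m S) (X : Mat m q S) :
    dmul od (dmul od A B) X = dmul od A (dmul od B X) := by
  funext i j
  show (⨅ k, od (⨅ l, od (A i l) (B l k)) (X k j))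
      = ⨅ l, od (A i l) (⨅ k, od (B l k) (X k j))
  calc (⨅ k, od (⨅ l, od (A i l) (B l k)) (X k j))
      = ⨅ k, ⨅ l, od (od (A i l) (B l k)) (X k j) :=
        iInf_congr fun k => iInf_od' h _ _
    _ = ⨅ l, ⨅ k, od (A i l) (od (B l k) (X k j)) := by
        rw [iInf_comm]
        exact iInf_congr fun l => iInf_congr fun k => by rw [h.assoc]
    _ = ⨅ l, od (A i l) (⨅ k, od (B l k) (X k j)) :=
        iInf_congr fun l => (od_iInf' h _ _).symm

lemma dmul_iInf_left (h : IsDualProduct od) {n m : ℕ} {ι : Sort*}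
    (A : ι → Mat n n S) (X : Mat n m S) :
    dmul od (⨅ i, A i) X = ⨅ i, dmul od (A i) X := by
  funext i j
  simp only [dmul, iInf_apply]
  rw [iInf_comm]
  congr 1
  funext k
  rw [iInf_od' h]

lemma le_dpow_dmul (h : IsDualProduct od) {n m : ℕ} {B : Mat n n S}
    {X : Mat n m S} (hX : X ≤ dmul od B X) (k : ℕ) :
    X ≤ dmul od (dpow od B k) X := by
  induction k with
  | zero => rw [dpow, dmul_dualId_left h]
  | succ k ih =>
      rw [dpow, dmul_assoc h]
      exact le_trans hX (dmul_mono h le_rfl ih)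

end Aux

theorem dual_closure_equivalences
    (od : S → S → S) (hod : IsDualProduct od) {n p : ℕ}
    (lres : ∀ {q : ℕ}, Mat n n S → Mat n q S → Mat n q S)
    (hlres : ∀ {q : ℕ} (M : Mat n n S) (Y : Mat n q S),
      IsLeast {Z : Mat n q S | Y ≤ dmul od M Z} (lres M Y))
    (B : Mat n n S) (X : Mat n p S) :
    List.TFAE
      [ X ≤ dmul od B X,
        lres B X ≤ X,
        lres (dstar od B) X = X,
        dmul od (dstar od B) X = X ] := by
  tfae_have 1 → 4 := by
    intro h1
    apply le_antisymm
    · calc dmul od (dstar od B) X ≤ dmul od (dualId n) X :=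
            dmul_mono hod (iInf_le _ 0) le_rfl
        _ = X := dmul_dualId_left hod X
    · rw [dstar, dmul_iInf_left hod]
      exact le_iInf fun k => le_dpow_dmul hod h1 k
  tfae_have 4 → 3 := by
    intro h4
    apply le_antisymm
    · exact (hlres _ X).2 (le_of_eq h4.symm)
    · calc X ≤ dmul od (dstar od B) (lres (dstar od B) X) := (hlres (dstar od B) X).1
        _ ≤ dmul od (dualId n) (lres (dstar od B) X) := dmul_mono hod (iInf_le _ 0) le_rfl
        _ = lres (dstar od B) X := dmul_dualId_left hod _
  tfae_have 3 → 2 := by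
    intro h3
    apply (hlres B X).2
    have h5 := (hlres (dstar od B) X).1
    rw [h3] at h5
    show X ≤ dmul od B X
    calc X ≤ dmul od (dstar od B) X := h5
      _ ≤ dmul od (dpow od B 1) X := dmul_mono hod (iInf_le _ 1) le_rfl
      _ = dmul od B X := by
          show dmul od (dmul od B (dualId n)) X = dmul od B X
          rw [dmul_assoc hod, dmul_dualId_left hod]
  tfae_have 2 → 1 := by
    intro h2
    exact le_trans ((hlres B X).1) (dmul_mono hod le_rfl h2)
  tfae_finish
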